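/- For a pair of random variables (X, Y) and an r-round interactive protocol U_1, ..., U_r satisfying the Markov chains U_i — (X, U^{i-1}) — Y for odd i and U_i — (Y, U^{i-1}) — X for even i, the following identity holds: Σ_{i odd} I(U_i; Y | U^{i-1}) + Σ_{i even} I(U_i; X | U^{i-1}) = I(X;Y) - I(X;Y | U^r). -/
import Mathlib

open Finset

variable {Ω : Type*} [Fintype Ω]

/-- Shannon entropy of the discrete random variable `T` under the pmf `p`. -/
noncomputable def ent {α : Type*} [DecidableEq α] (p : Ω → ℝ) (T : Ω → α) : ℝ :=
  -∑ ω, p ω * Real.log (∑ ω', if T ω' = T ω then p ω' else 0)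

/-- Mutual information `I(X;Y)` under the pmf `p`. -/
noncomputable def mi {α β : Type*} [DecidableEq α] [DecidableEq β]
    (p : Ω → ℝ) (X : Ω → α) (Y : Ω → β) : ℝ :=
  ent p X + ent p Y - ent p (fun ω => (X ω, Y ω))

/-- Conditional mutual information `I(X;Y|Z)` under the pmf `p`. -/
noncomputable def cmi {α β γ : Type*} [DecidableEq α] [DecidableEq β] [DecidableEq γ]
    (p : Ω → ℝ) (X : Ω → α) (Y : Ω → β) (Z : Ω → γ) : ℝ :=
  ent p (fun ω => (X ω, Z ω)) + ent p (fun ω => (Y ω, Z ω))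
    - ent p (fun ω => (X ω, Y ω, Z ω)) - ent p Z

/-- The transcript `U^{i-1}` of the first `i` messages (indices `0, …, i-1`). -/
def hist {r : ℕ} {𝒰 : Type*} (U : Fin r → Ω → 𝒰) (i : ℕ) : Ω → (Fin r → Option 𝒰) :=
  fun ω j => if (j : ℕ) < i then some (U j ω) else none

lemma ent_congr {α β : Type*} [DecidableEq α] [DecidableEq β] (p : Ω → ℝ)
    (T : Ω → α) (S : Ω → β) (h : ∀ ω ω', T ω' = T ω ↔ S ω' = S ω) :
    ent p T = ent p S := by
  unfold ent
  congr 1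
  apply Finset.sum_congr rfl
  intro ω _
  congr 2
  apply Finset.sum_congr rfl
  intro ω' _
  simp only [h ω ω']

lemma cmi_congr_right {α β γ γ' : Type*} [DecidableEq α] [DecidableEq β]
    [DecidableEq γ] [DecidableEq γ'] (p : Ω → ℝ) (A : Ω → α) (B : Ω → β)
    (Z : Ω → γ) (Z' : Ω → γ') (h : ∀ ω ω', Z ω' = Z ω ↔ Z' ω' = Z' ω) :
    cmi p A B Z = cmi p A B Z' := by
  unfold cmi
  rw [ent_congr p Z Z' h,
    ent_congr p (fun ω => (A ω, Z ω)) (fun ω => (A ω, Z' ω))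
      (by intro ω ω'; simp only [Prod.ext_iff, h ω ω']),
    ent_congr p (fun ω => (B ω, Z ω)) (fun ω => (B ω, Z' ω))
      (by intro ω ω'; simp only [Prod.ext_iff, h ω ω']),
    ent_congr p (fun ω => (A ω, B ω, Z ω)) (fun ω => (A ω, B ω, Z' ω))
      (by intro ω ω'; simp only [Prod.ext_iff, h ω ω'])]

lemma cmi_comm {α β γ : Type*} [DecidableEq α] [DecidableEq β] [DecidableEq γ]
    (p : Ω → ℝ) (A : Ω → α) (B : Ω → β) (Z : Ω → γ) :
    cmi p A B Z = cmi p B A Z := by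
  unfold cmi
  rw [ent_congr p (fun ω => (A ω, B ω, Z ω)) (fun ω => (B ω, A ω, Z ω))
      (by intro ω ω'; simp only [Prod.ext_iff]; tauto)]
  ring

lemma cmi_step {α β γ δ : Type*} [DecidableEq α] [DecidableEq β] [DecidableEq γ]
    [DecidableEq δ] (p : Ω → ℝ) (V : Ω → δ) (X : Ω → α) (Y : Ω → β) (Z : Ω → γ)
    (hM : cmi p V Y (fun ω => (X ω, Z ω)) = 0) :
    cmi p X Y Z - cmi p X Y (fun ω => (V ω, Z ω)) = cmi p V Y Z := by
  unfold cmi at hM ⊢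
  have e1 : ent p (fun ω => (X ω, Y ω, Z ω)) = ent p (fun ω => (Y ω, (X ω, Z ω))) :=
    ent_congr _ _ _ (by intro ω ω'; simp only [Prod.ext_iff]; tauto)
  have e2 : ent p (fun ω => (X ω, (V ω, Z ω))) = ent p (fun ω => (V ω, (X ω, Z ω))) :=
    ent_congr _ _ _ (by intro ω ω'; simp only [Prod.ext_iff]; tauto)
  have e3 : ent p (fun ω => (X ω, Y ω, (V ω, Z ω))) = ent p (fun ω => (V ω, Y ω, (X ω, Z ω))) :=
    ent_congr _ _ _ (by intro ω ω'; simp only [Prod.ext_iff]; tauto)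
  have e4 : ent p (fun ω => (V ω, Y ω, Z ω)) = ent p (fun ω => (Y ω, (V ω, Z ω))) :=
    ent_congr _ _ _ (by intro ω ω'; simp only [Prod.ext_iff]; tauto)
  linarith

lemma hist_succ_iff {r : ℕ} {𝒰 : Type*} (U : Fin r → Ω → 𝒰) (n : ℕ) (hn : n < r) :
    ∀ ω ω', hist U (n+1) ω' = hist U (n+1) ω ↔
      (U ⟨n, hn⟩ ω' = U ⟨n, hn⟩ ω ∧ hist U n ω' = hist U n ω) := by
  intro ω ω'
  constructor
  · intro h
    have h' := fun j => congrFun h j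
    constructor
    · have := h' ⟨n, hn⟩
      simpa [hist] using this
    · funext j
      have := h' j
      simp only [hist] at this ⊢
      by_cases hj : (j:ℕ) < n
      · have hj' : (j:ℕ) < n + 1 := Nat.lt_succ_of_lt hj
        simp only [hj, hj', if_true] at this ⊢
        exact this
      · simp [hj]
  · rintro ⟨h1, h2⟩
    funext j
    have h2' := congrFun h2 j
    simp only [hist] at h2' ⊢
    by_cases hj : (j:ℕ) < n
    · have hj' : (j:ℕ) < n + 1 := Nat.lt_succ_of_lt hj
      simp only [hj, hj', if_true] at h2' ⊢
      exact h2'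
    · by_cases hj' : (j:ℕ) < n+1
      · have hjn : (j:ℕ) = n := by omega
        have hje : j = ⟨n, hn⟩ := Fin.ext (by simp [hjn])
        simp [hj', hje, h1]
      · simp [hj']

lemma hist_zero_const {r : ℕ} {𝒰 : Type*} (U : Fin r → Ω → 𝒰) :
    hist U 0 = fun _ _ => none := by
  funext ω j; simp [hist]

lemma cmi_hist_zero {r : ℕ} {𝒳 𝒴 𝒰 : Type*} [DecidableEq 𝒳] [DecidableEq 𝒴]
    [DecidableEq 𝒰] (p : Ω → ℝ) (hp1 : ∑ ω, p ω = 1)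
    (X : Ω → 𝒳) (Y : Ω → 𝒴) (U : Fin r → Ω → 𝒰) :
    cmi p X Y (hist U 0) = mi p X Y := by
  rw [hist_zero_const U]
  unfold cmi mi
  have h0 : ent p (fun _ : Ω => (fun _ : Fin r => (none : Option 𝒰))) = 0 := by
    unfold ent
    simp [hp1]
  rw [h0,
    ent_congr p (fun ω => (X ω, (fun _ : Fin r => (none : Option 𝒰)))) X
      (by intro ω ω'; simp only [Prod.ext_iff]; tauto),
    ent_congr p (fun ω => (Y ω, (fun _ : Fin r => (none : Option 𝒰)))) Y
      (by intro ω ω'; simp only [Prod.ext_iff]; tauto),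
    ent_congr p (fun ω => (X ω, Y ω, (fun _ : Fin r => (none : Option 𝒰))))
      (fun ω => (X ω, Y ω))
      (by intro ω ω'; simp only [Prod.ext_iff]; tauto)]
  ring

theorem stmt7 {𝒳 𝒴 𝒰 : Type*} [DecidableEq 𝒳] [DecidableEq 𝒴] [DecidableEq 𝒰]
    (r : ℕ) (p : Ω → ℝ) (hp : ∀ ω, 0 ≤ p ω) (hp1 : ∑ ω, p ω = 1)
    (X : Ω → 𝒳) (Y : Ω → 𝒴) (U : Fin r → Ω → 𝒰)
    (hmarkovA : ∀ i : Fin r, Even (i : ℕ) →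
      cmi p (U i) Y (fun ω => (X ω, hist U (i : ℕ) ω)) = 0)
    (hmarkovB : ∀ i : Fin r, ¬ Even (i : ℕ) →
      cmi p (U i) X (fun ω => (Y ω, hist U (i : ℕ) ω)) = 0) :
    (∑ i : Fin r,
        if Even (i : ℕ) then cmi p (U i) Y (hist U (i : ℕ))
        else cmi p (U i) X (hist U (i : ℕ)))
      = mi p X Y - cmi p X Y (hist U r) := by
  classical
  set F : ℕ → ℝ := fun i =>
    if h : i < r then
      (if Even i then cmi p (U ⟨i, h⟩) Y (hist U i) else cmi p (U ⟨i, h⟩) X (hist U i))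
    else 0 with hF
  have key : ∀ n, n ≤ r →
      (∑ i ∈ Finset.range n, F i) = mi p X Y - cmi p X Y (hist U n) := by
    intro n hn
    induction n with
    | zero => simp [cmi_hist_zero p hp1 X Y U]
    | succ m ih =>
      have hm : m < r := hn
      rw [Finset.sum_range_succ, ih (le_of_lt hm)]
      have hrec : cmi p X Y (hist U (m+1))
          = cmi p X Y (fun ω => (U ⟨m, hm⟩ ω, hist U m ω)) := by
        apply cmi_congr_right
        intro ω ω'
        rw [hist_succ_iff U m hm ω ω']
        simp only [Prod.ext_iff]
      have hFm : F m = if Even m then cmi p (U ⟨m, hm⟩) Y (hist U m)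
          else cmi p (U ⟨m, hm⟩) X (hist U m) := by
        simp [hF, hm]
      by_cases he : Even m
      · have hM := hmarkovA ⟨m, hm⟩ he
        have hstep := cmi_step p (U ⟨m, hm⟩) X Y (hist U m) hM
        rw [hFm, if_pos he, hrec]
        linarith
      · have hM := hmarkovB ⟨m, hm⟩ he
        have hstep := cmi_step p (U ⟨m, hm⟩) Y X (hist U m) hM
        rw [hFm, if_neg he, hrec]
        have c1 := cmi_comm p X Y (hist U m)
        have c2 := cmi_comm p X Y (fun ω => (U ⟨m, hm⟩ ω, hist U m ω))
        linarith
  have hsum : (∑ i : Fin r,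
        if Even (i : ℕ) then cmi p (U i) Y (hist U (i : ℕ))
        else cmi p (U i) X (hist U (i : ℕ)))
      = ∑ i ∈ Finset.range r, F i := by
    rw [← Fin.sum_univ_eq_sum_range]
    apply Finset.sum_congr rfl
    intro i _
    simp [hF, i.isLt]
  rw [hsum, key r le_rfl]
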